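/- Symmetric design construction: let Δ be a symmetric 2-(v,k,λ) design with λ ≥ 2, and let Γ be one block of Δ. Regard the k points of Γ as drugs and the remaining v-k points as cancer types. Then the v-1 blocks of Δ other than Γ, each split into its λ drugs (points in Γ) and k-λ cancer types (points outside Γ), form a 2-part 2-design with b = v-1, v1 = v-k, v2 = k, k1 = k-λ, k2 = λ, λ11 = λ12 = λ and λ22 = λ-1. -/
import Mathlib


open Finset

/-- Symmetric design construction: deleting one block Γ of a symmetric
2-(v,k,λ) design with λ ≥ 2, and regarding the points of Γ as drugs and the
other points as cancer types, the remaining v-1 blocks form a 2-part 2-design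
with b = v-1, v1 = v-k, v2 = k, k1 = k-λ, k2 = λ, λ11 = λ12 = λ, λ22 = λ-1. -/
theorem symmetric_design_two_part
    (v k lam : ℕ) (hlam : 2 ≤ lam) (hk : k < v)
    (Bl : Fin v → Finset (Fin v))
    (hcard : ∀ i, (Bl i).card = k)
    (hlameq : lam * (v - 1) = k * (k - 1))
    (hdes : ∀ x y : Fin v, x ≠ y →
      (Finset.univ.filter (fun i => x ∈ Bl i ∧ y ∈ Bl i)).card = lam)
    (hrep : ∀ x : Fin v, (Finset.univ.filter (fun i => x ∈ Bl i)).card = k)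
    (hint : ∀ i i' : Fin v, i ≠ i' → (Bl i ∩ Bl i').card = lam)
    (i0 : Fin v) :
    -- v1 = v - k cancer types (points outside Γ) and v2 = k drugs (points of Γ)
    ((Bl i0)ᶜ.card = v - k) ∧ ((Bl i0).card = k) ∧
    -- each remaining block has k1 = k - λ cancer types and k2 = λ drugs
    (∀ i, i ≠ i0 → ((Bl i) \ (Bl i0)).card = k - lam ∧ ((Bl i) ∩ (Bl i0)).card = lam) ∧
    -- pairs of cancer types concur in λ11 = λ of the remaining blocks
    (∀ x y : Fin v, x ∉ Bl i0 → y ∉ Bl i0 → x ≠ y →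
      (Finset.univ.filter (fun i => i ≠ i0 ∧ x ∈ Bl i ∧ y ∈ Bl i)).card = lam) ∧
    -- pairs of drugs concur in λ22 = λ - 1 of the remaining blocks
    (∀ x y : Fin v, x ∈ Bl i0 → y ∈ Bl i0 → x ≠ y →
      (Finset.univ.filter (fun i => i ≠ i0 ∧ x ∈ Bl i ∧ y ∈ Bl i)).card = lam - 1) ∧
    -- each cancer type occurs with each drug in λ12 = λ of the remaining blocks
    (∀ x y : Fin v, x ∉ Bl i0 → y ∈ Bl i0 →
      (Finset.univ.filter (fun i => i ≠ i0 ∧ x ∈ Bl i ∧ y ∈ Bl i)).card = lam) := by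
  refine ⟨?_, hcard i0, ?_, ?_, ?_, ?_⟩
  · rw [Finset.card_compl, hcard i0, Fintype.card_fin]
  · intro i hi
    have hii : (Bl i ∩ Bl i0).card = lam := hint i i0 hi
    refine ⟨?_, hii⟩
    have := Finset.card_sdiff_add_card_inter (Bl i) (Bl i0)
    rw [hcard i] at this
    omega
  · intro x y hx hy hxy
    rw [← hdes x y hxy]
    congr 1
    apply Finset.filter_congr
    intro i _
    simp only [and_iff_right_iff_imp]
    rintro ⟨hxi, _⟩ rfl
    exact hx hxi
  · intro x y hx hy hxy
    have h1 : (Finset.univ.filter (fun i => i ≠ i0 ∧ x ∈ Bl i ∧ y ∈ Bl i))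
        = (Finset.univ.filter (fun i => x ∈ Bl i ∧ y ∈ Bl i)).erase i0 := by
      ext i
      simp only [Finset.mem_filter, Finset.mem_erase, Finset.mem_univ, true_and]
    rw [h1, Finset.card_erase_of_mem (by simp [hx, hy]), hdes x y hxy]
  · intro x y hx hy
    have hxy : x ≠ y := fun h => hx (h ▸ hy)
    rw [← hdes x y hxy]
    congr 1
    apply Finset.filter_congr
    intro i _
    simp only [and_iff_right_iff_imp]
    rintro ⟨hxi, _⟩ rfl
    exact hx hxi
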